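/- For all real numbers r, s with 0 ≤ r ≤ s, one has (1/√2)·√(s² − r²) ≤ √(cosh s − cosh r) ≤ (1/√2)·√(s² − r²)·exp((r² + s²)/24). -/

import Mathlib

open Real

theorem deriv_nonneg_aux {f f' : ℝ → ℝ} (hf : ∀ t, HasDerivAt f (f' t) t)
    (h' : ∀ t, 0 ≤ t → 0 ≤ f' t) {x : ℝ} (hx : 0 ≤ x) : f 0 ≤ f x := by
  have hmono : MonotoneOn f (Set.Ici (0:ℝ)) := by
    apply monotoneOn_of_deriv_nonneg (convex_Ici 0)
    · exact fun t _ => (hf t).continuousAt.continuousWithinAt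
    · exact fun t _ => (hf t).differentiableAt.differentiableWithinAt
    · intro t ht
      rw [(hf t).deriv]
      rw [interior_Ici] at ht
      exact h' t (le_of_lt ht)
  exact hmono (by simp) hx hx

theorem L0 {x : ℝ} (hx : 0 ≤ x) : Real.cosh x ≤ 1 + x * Real.sinh x := by
  have h := deriv_nonneg_aux (f := fun t => 1 + t * Real.sinh t - Real.cosh t)
    (f' := fun t => t * Real.cosh t) ?_ ?_ hx
  · simpa using h
  · intro t
    have : HasDerivAt (fun t : ℝ => 1 + t * Real.sinh t - Real.cosh t)
        (0 + (1 * Real.sinh t + t * Real.cosh t) - Real.sinh t) t := by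
      exact ((hasDerivAt_const t 1).add ((hasDerivAt_id t).mul (Real.hasDerivAt_sinh t))).sub
        (Real.hasDerivAt_cosh t)
    convert this using 1; ring
  · intro t ht
    exact mul_nonneg ht (Real.cosh_pos (x := t)).le

theorem L1 {x : ℝ} (hx : 0 ≤ x) : 2 * Real.sinh x ≤ x + x * Real.cosh x := by
  have h := deriv_nonneg_aux (f := fun t => t + t * Real.cosh t - 2 * Real.sinh t)
    (f' := fun t => 1 + t * Real.sinh t - Real.cosh t + (Real.cosh t - Real.cosh t)) ?_ ?_ hx
  · simp at h; linarith
  · intro t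
    have : HasDerivAt (fun t : ℝ => t + t * Real.cosh t - 2 * Real.sinh t)
        (1 + (1 * Real.cosh t + t * Real.sinh t) - 2 * Real.cosh t) t := by
      exact ((hasDerivAt_id t).add ((hasDerivAt_id t).mul (Real.hasDerivAt_cosh t))).sub
        ((Real.hasDerivAt_sinh t).const_mul 2)
    convert this using 1; ring
  · intro t ht
    have := L0 ht
    linarith

theorem hasDerivAt_exp_sq_div (t : ℝ) :
    HasDerivAt (fun t : ℝ => Real.exp (t ^ 2 / 6)) (t / 3 * Real.exp (t ^ 2 / 6)) t := by
  have h1 : HasDerivAt (fun t : ℝ => t ^ 2 / 6) (2 * t / 6) t := by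
    simpa using ((hasDerivAt_pow 2 t).div_const 6)
  have := (Real.hasDerivAt_exp (t ^ 2 / 6)).comp t h1
  exact this.congr_deriv (by ring)

theorem L2 {x : ℝ} (hx : 0 ≤ x) :
    Real.cosh x ≤ Real.exp (x ^ 2 / 6) + x / 3 * Real.sinh x := by
  have h := deriv_nonneg_aux
    (f := fun t => Real.exp (t ^ 2 / 6) + t / 3 * Real.sinh t - Real.cosh t)
    (f' := fun t => t / 3 * Real.exp (t ^ 2 / 6) + t / 3 * Real.cosh t - 2 / 3 * Real.sinh t)
    ?_ ?_ hx
  · simp at h; linarith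
  · intro t
    have : HasDerivAt (fun t : ℝ => Real.exp (t ^ 2 / 6) + t / 3 * Real.sinh t - Real.cosh t)
        (t / 3 * Real.exp (t ^ 2 / 6) + (1 / 3 * Real.sinh t + t / 3 * Real.cosh t)
          - Real.sinh t) t := by
      exact ((hasDerivAt_exp_sq_div t).add
        (((hasDerivAt_id t).div_const 3).mul (Real.hasDerivAt_sinh t))).sub
        (Real.hasDerivAt_cosh t)
    convert this using 1; ring
  · intro t ht
    have h1 := L1 ht
    have h2 : (1:ℝ) ≤ Real.exp (t ^ 2 / 6) := by
      rw [← Real.exp_zero]; exact Real.exp_le_exp.2 (by positivity)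
    nlinarith [mul_nonneg ht (sub_nonneg.2 h2)]

theorem sinh_le_mul_exp {x : ℝ} (hx : 0 ≤ x) :
    Real.sinh x ≤ x * Real.exp (x ^ 2 / 6) := by
  have h := deriv_nonneg_aux
    (f := fun t => t - Real.sinh t * Real.exp (-(t ^ 2) / 6))
    (f' := fun t => 1 - (Real.cosh t - t / 3 * Real.sinh t) * Real.exp (-(t ^ 2) / 6))
    ?_ ?_ hx
  · simp at h
    have hE : (0:ℝ) < Real.exp (-(x ^ 2) / 6) := Real.exp_pos _
    have : Real.sinh x * Real.exp (-(x ^ 2) / 6) ≤ x := by linarith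
    have h2 := mul_le_mul_of_nonneg_right this (Real.exp_pos (x ^ 2 / 6)).le
    rwa [mul_assoc, ← Real.exp_add, (by ring : -(x^2)/6 + x^2/6 = 0), Real.exp_zero,
      mul_one] at h2
  · intro t
    have hneg : HasDerivAt (fun t : ℝ => Real.exp (-(t ^ 2) / 6))
        (-(t / 3) * Real.exp (-(t ^ 2) / 6)) t := by
      have h1 : HasDerivAt (fun t : ℝ => -(t ^ 2) / 6) (-(2 * t) / 6) t := by
        simpa using ((hasDerivAt_pow 2 t).neg.div_const 6)
      have := (Real.hasDerivAt_exp (-(t ^ 2) / 6)).comp t h1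
      exact this.congr_deriv (by ring)
    have : HasDerivAt (fun t : ℝ => t - Real.sinh t * Real.exp (-(t ^ 2) / 6))
        (1 - (Real.cosh t * Real.exp (-(t ^ 2) / 6) +
          Real.sinh t * (-(t / 3) * Real.exp (-(t ^ 2) / 6)))) t :=
      (hasDerivAt_id t).sub ((Real.hasDerivAt_sinh t).mul hneg)
    convert this using 1; ring
  · intro t ht
    have h2 := L2 ht
    have hE : (0:ℝ) < Real.exp (-(t ^ 2) / 6) := Real.exp_pos _
    have key : (Real.cosh t - t / 3 * Real.sinh t) * Real.exp (-(t ^ 2) / 6) ≤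
        Real.exp (t ^ 2 / 6) * Real.exp (-(t ^ 2) / 6) := by
      apply mul_le_mul_of_nonneg_right _ hE.le
      linarith
    rw [← Real.exp_add, (by ring : t^2/6 + -(t^2)/6 = 0), Real.exp_zero] at key
    linarith

theorem cosh_diff_sqrt_bounds (r s : ℝ) (hr : 0 ≤ r) (hrs : r ≤ s) :
    (1 / Real.sqrt 2) * Real.sqrt (s ^ 2 - r ^ 2) ≤ Real.sqrt (Real.cosh s - Real.cosh r) ∧
      Real.sqrt (Real.cosh s - Real.cosh r) ≤
        (1 / Real.sqrt 2) * Real.sqrt (s ^ 2 - r ^ 2) * Real.exp ((r ^ 2 + s ^ 2) / 24) := by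
  set a := (s + r) / 2 with ha_def
  set b := (s - r) / 2 with hb_def
  have ha : 0 ≤ a := by simp [ha_def]; linarith
  have hb : 0 ≤ b := by simp [hb_def]; linarith
  have hs : s = a + b := by rw [ha_def, hb_def]; ring
  have hrr : r = a - b := by rw [ha_def, hb_def]; ring
  have key : Real.cosh s - Real.cosh r = 2 * Real.sinh a * Real.sinh b := by
    rw [hs, hrr, Real.cosh_add, Real.cosh_sub]; ring
  have hsa : a ≤ Real.sinh a := Real.self_le_sinh_iff.2 ha
  have hsb : b ≤ Real.sinh b := Real.self_le_sinh_iff.2 hb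
  have hab : 2 * a * b = (s ^ 2 - r ^ 2) / 2 := by rw [ha_def, hb_def]; ring
  have hsq : 0 ≤ s ^ 2 - r ^ 2 := by nlinarith
  have hhalf : ∀ x : ℝ, 0 ≤ x → Real.sqrt (x / 2) = 1 / Real.sqrt 2 * Real.sqrt x := by
    intro x hx
    rw [Real.sqrt_div hx, div_eq_mul_inv, one_div, mul_comm]
  constructor
  · have lower : (s ^ 2 - r ^ 2) / 2 ≤ Real.cosh s - Real.cosh r := by
      rw [key, ← hab]
      have := mul_le_mul hsa hsb hb (le_trans ha hsa)
      nlinarith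
    calc (1 / Real.sqrt 2) * Real.sqrt (s ^ 2 - r ^ 2)
        = Real.sqrt ((s ^ 2 - r ^ 2) / 2) := (hhalf _ hsq).symm
      _ ≤ Real.sqrt (Real.cosh s - Real.cosh r) := Real.sqrt_le_sqrt lower
  · have h1 := sinh_le_mul_exp ha
    have h2 := sinh_le_mul_exp hb
    have hE : Real.exp (a ^ 2 / 6) * Real.exp (b ^ 2 / 6) =
        Real.exp ((r ^ 2 + s ^ 2) / 12) := by
      rw [← Real.exp_add]; congr 1; rw [ha_def, hb_def]; ring
    have upper : Real.cosh s - Real.cosh r ≤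
        (s ^ 2 - r ^ 2) / 2 * Real.exp ((r ^ 2 + s ^ 2) / 12) := by
      rw [key]
      have hmul := mul_le_mul h1 h2 (le_trans hb hsb) (by positivity)
      calc 2 * Real.sinh a * Real.sinh b
          ≤ 2 * (a * Real.exp (a ^ 2 / 6) * (b * Real.exp (b ^ 2 / 6))) := by
            nlinarith [le_trans ha hsa, le_trans hb hsb]
        _ = 2 * a * b * (Real.exp (a ^ 2 / 6) * Real.exp (b ^ 2 / 6)) := by ring
        _ = (s ^ 2 - r ^ 2) / 2 * Real.exp ((r ^ 2 + s ^ 2) / 12) := by rw [hab, hE]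
    calc Real.sqrt (Real.cosh s - Real.cosh r)
        ≤ Real.sqrt ((s ^ 2 - r ^ 2) / 2 * Real.exp ((r ^ 2 + s ^ 2) / 12)) :=
          Real.sqrt_le_sqrt upper
      _ = Real.sqrt ((s ^ 2 - r ^ 2) / 2) * Real.sqrt (Real.exp ((r ^ 2 + s ^ 2) / 12)) :=
          Real.sqrt_mul (by positivity) _
      _ = 1 / Real.sqrt 2 * Real.sqrt (s ^ 2 - r ^ 2) * Real.exp ((r ^ 2 + s ^ 2) / 24) := by
          rw [hhalf _ hsq, ← Real.exp_half,
            show (r ^ 2 + s ^ 2) / 12 / 2 = (r ^ 2 + s ^ 2) / 24 by ring]
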